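/- arXiv:2507.06708 — 2 statements merged into one kernel-verified Lean document; each statement's English description precedes it below -/
import Mathlib

section
/- Let integers m, ℓ satisfy m ≥ 5 and 1 ≤ ℓ ≤ m, and let α ∈ (0, π/2) satisfy sin²α = (ℓ(ℓ+m−2) + 2m−8)/(2ℓ(ℓ+m−2)). Then for every x ∈ ℝ^m∖{0} the map q = (sin α · u, cos α) satisfies the pointwise identities |∇q(x)|² = (ℓ(ℓ+m−2) + 2m−8)/(2|x|²) and ⟨Δ²q(x), q(x)⟩ = (ℓ+2)(ℓ+m−4)(ℓ(ℓ+m−2) + 2m−8)/(2|x|⁴). -/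
open MeasureTheory Metric Real RealInnerProductSpace

noncomputable section

abbrev E (m : ℕ) : Type := EuclideanSpace ℝ (Fin m)

/-- The `i`-th partial derivative of a map between Euclidean spaces. -/
def pd {m N : ℕ} (f : E m → E N) (i : Fin m) (x : E m) : E N :=
  fderiv ℝ f x (EuclideanSpace.single i 1)

/-- The componentwise Euclidean Laplacian `Δf = Σ_i ∂_i² f`. -/
def lap {m N : ℕ} (f : E m → E N) (x : E m) : E N :=
  ∑ i : Fin m, pd (fun y => pd f i y) i x

/-- `|∇f|² = Σ_i |∂_i f|²`. -/
def gradSq {m N : ℕ} (f : E m → E N) (x : E m) : ℝ :=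
  ∑ i : Fin m, ‖pd f i x‖ ^ 2

/-- `⟨∇f, ∇g⟩ = Σ_i ⟨∂_i f, ∂_i g⟩`. -/
def gradInner {m N : ℕ} (f g : E m → E N) (x : E m) : ℝ :=
  ∑ i : Fin m, ⟪pd f i x, pd g i x⟫

/-- The deformed generalized equator map `q = (sin α · u, cos α)`. -/
def qmap {m N : ℕ} (α : ℝ) (u : E m → E N) (x : E m) : E (N + 1) :=
  WithLp.toLp 2 (fun i : Fin (N + 1) => if h : (i : ℕ) < N then Real.sin α * u x ⟨i, h⟩ else Real.cos α)

/-- The Hessian quadratic form of the bienergy at `q`, evaluated on `η`. -/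
def Qform {m N : ℕ} (q η : E m → E N) : ℝ :=
  ∫ x in ball (0 : E m) 1,
    (‖lap η x‖ ^ 2 + 2 * (gradSq q x) ^ 2 * ‖η x‖ ^ 2
      - ⟪lap (lap q) x, q x⟫ * ‖η x‖ ^ 2
      - 2 * gradSq q x * gradSq η x - 4 * (gradInner q η x) ^ 2)

/-- Admissible test fields: smooth, compactly supported in the unit ball,
pointwise orthogonal to `q` on `B^m ∖ {0}`. -/
def Admissible {m N : ℕ} (q η : E m → E N) : Prop :=
  ContDiff ℝ (⊤ : ℕ∞) η ∧ tsupport η ⊆ ball (0 : E m) 1 ∧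
    ∀ x ∈ ball (0 : E m) 1 \ {(0 : E m)}, ⟪η x, q x⟫ = 0

/-! ### Auxiliary lemmas -/

lemma sum_single_eq {m : ℕ} (x : E m) :
    ∑ i : Fin m, x i • EuclideanSpace.single i (1:ℝ) = x := by
  ext j
  simp [WithLp.ofLp_sum, EuclideanSpace.single_apply, Pi.single_apply]

lemma norm_sq_sum {m : ℕ} (x : E m) : ∑ i : Fin m, (x i)^2 = ‖x‖^2 := by
  rw [← real_inner_self_eq_norm_sq, PiLp.inner_apply]
  simp [sq]

/-- The isometric inclusion `E N → E (N+1)` as first `N` coordinates. -/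
def incl (N : ℕ) : E N →ₗᵢ[ℝ] E (N + 1) where
  toFun v := WithLp.toLp 2 (fun i : Fin (N + 1) => if h : (i : ℕ) < N then v ⟨i, h⟩ else 0)
  map_add' v w := by
    ext j
    by_cases h : (j : ℕ) < N <;> simp [h, PiLp.add_apply]
  map_smul' c v := by
    ext j
    by_cases h : (j : ℕ) < N <;> simp [h, PiLp.smul_apply]
  norm_map' v := by
    have h1 : ∀ y : E (N+1), ‖y‖ = Real.sqrt (∑ i, (y i)^2) := by
      intro y; rw [EuclideanSpace.norm_eq]; simp [Real.norm_eq_abs, sq_abs]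
    have h2 : ∀ y : E N, ‖y‖ = Real.sqrt (∑ i, (y i)^2) := by
      intro y; rw [EuclideanSpace.norm_eq]; simp [Real.norm_eq_abs, sq_abs]
    rw [h1, h2]
    congr 1
    rw [Fin.sum_univ_castSucc]
    simp [Fin.is_lt]

lemma incl_apply_last {N : ℕ} (v : E N) : incl N v (Fin.last N) = 0 := by
  simp [incl, Fin.last]

lemma qmap_eq {m N : ℕ} (α : ℝ) (u : E m → E N) :
    qmap α u = fun x => Real.sin α • (incl N) (u x)
      + Real.cos α • EuclideanSpace.single (Fin.last N) (1:ℝ) := by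
  funext x; ext j
  by_cases h : (j : ℕ) < N
  · have hj : j ≠ Fin.last N := by
      intro hc; rw [hc] at h; simp [Fin.last] at h
    simp [qmap, incl, h, PiLp.add_apply, PiLp.smul_apply, EuclideanSpace.single_apply, hj]
  · have hj : j = Fin.last N := by
      apply Fin.ext; simp [Fin.last]; omega
    simp [qmap, incl, h, PiLp.add_apply, PiLp.smul_apply, EuclideanSpace.single_apply, hj]

lemma pd_congr {m N : ℕ} {F G : E m → E N} (h : ∀ z : E m, z ≠ 0 → F z = G z)
    {y : E m} (hy : y ≠ 0) (i : Fin m) : pd F i y = pd G i y := by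
  unfold pd
  rw [Filter.EventuallyEq.fderiv_eq (Filter.eventually_of_mem
    (isOpen_compl_singleton.mem_nhds hy) (fun z hz => h z hz))]


/-- Inclusion as a continuous linear map. -/
def inclL (N : ℕ) : E N →L[ℝ] E (N + 1) := (incl N).toContinuousLinearMap

@[simp] lemma inclL_apply {N : ℕ} (v : E N) : inclL N v = incl N v := rfl

/-- auxiliary product function appearing in `∂(Δu)`. -/
def wfun {m N : ℕ} (c : ℝ) (u : E m → E N) (i : Fin m) (z : E m) : E N :=
  ((2*c) * (z i * ((‖z‖^2) * (‖z‖^2))⁻¹)) • u z + (-c * (‖z‖^2)⁻¹) • pd u i z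


set_option maxHeartbeats 2000000 in
/-- Pointwise identities for q = (sin α · u, cos α):
|∇q|² = (ℓ(ℓ+m−2)+2m−8)/(2|x|²) and ⟨Δ²q, q⟩ = (ℓ+2)(ℓ+m−4)(ℓ(ℓ+m−2)+2m−8)/(2|x|⁴). -/
theorem q_pointwise_identities
    (m ℓ N : ℕ) (hm : 5 ≤ m) (hℓ1 : 1 ≤ ℓ) (hℓm : ℓ ≤ m)
    (u : E m → E N)
    (hu_smooth : ContDiffOn ℝ (⊤ : ℕ∞) u {(0 : E m)}ᶜ)
    (hu_unit : ∀ x : E m, x ≠ 0 → ‖u x‖ = 1)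
    (hu_hom : ∀ c : ℝ, 0 < c → ∀ x : E m, u (c • x) = u x)
    (hu_lap : ∀ x : E m, x ≠ 0 →
      lap u x = (-((ℓ : ℝ) * ((ℓ : ℝ) + (m : ℝ) - 2)) / ‖x‖ ^ 2) • u x)
    (hu_grad : ∀ x : E m, x ≠ 0 →
      gradSq u x = (ℓ : ℝ) * ((ℓ : ℝ) + (m : ℝ) - 2) / ‖x‖ ^ 2)
    (α : ℝ) (hα : α ∈ Set.Ioo 0 (π / 2))
    (hsin : Real.sin α ^ 2 =
      ((ℓ : ℝ) * ((ℓ : ℝ) + (m : ℝ) - 2) + 2 * (m : ℝ) - 8) /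
        (2 * (ℓ : ℝ) * ((ℓ : ℝ) + (m : ℝ) - 2))) :
    ∀ x : E m, x ≠ 0 →
      gradSq (qmap α u) x =
        ((ℓ : ℝ) * ((ℓ : ℝ) + (m : ℝ) - 2) + 2 * (m : ℝ) - 8) / (2 * ‖x‖ ^ 2) ∧
      ⟪lap (lap (qmap α u)) x, qmap α u x⟫ =
        ((ℓ : ℝ) + 2) * ((ℓ : ℝ) + (m : ℝ) - 4) *
          ((ℓ : ℝ) * ((ℓ : ℝ) + (m : ℝ) - 2) + 2 * (m : ℝ) - 8) / (2 * ‖x‖ ^ 4) := by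
  intro x hx
  have hm5 : (5:ℝ) ≤ (m:ℝ) := by exact_mod_cast hm
  have hl1 : (1:ℝ) ≤ (ℓ:ℝ) := by exact_mod_cast hℓ1
  set c : ℝ := (ℓ:ℝ) * ((ℓ:ℝ) + (m:ℝ) - 2) with hcdef
  have hc0 : 0 < c := by nlinarith
  have hxn : ‖x‖ ≠ 0 := norm_ne_zero_iff.mpr hx
  -- basic differentiability
  have hu_diff : ∀ y : E m, y ≠ 0 → DifferentiableAt ℝ u y := by
    intro y hy
    exact (hu_smooth.differentiableOn (by simp)).differentiableAt
      (isOpen_compl_singleton.mem_nhds hy)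
  have hfd_cd : ContDiffOn ℝ (⊤ : ℕ∞) (fun y => fderiv ℝ u y) {(0:E m)}ᶜ :=
    hu_smooth.fderiv_of_isOpen isOpen_compl_singleton (by simp)
  have hpu_cd : ∀ i : Fin m, ContDiffOn ℝ (⊤ : ℕ∞) (fun y => pd u i y) {(0:E m)}ᶜ := by
    intro i
    exact (ContinuousLinearMap.apply ℝ (E N) (EuclideanSpace.single i 1)).contDiff.comp_contDiffOn
      hfd_cd
  have hpu_diff : ∀ (i : Fin m) (y : E m), y ≠ 0 → DifferentiableAt ℝ (fun z => pd u i z) y := by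
    intro i y hy
    exact ((hpu_cd i).differentiableOn (by simp)).differentiableAt
      (isOpen_compl_singleton.mem_nhds hy)
  -- Euler relation
  have heuler0 : ∀ y : E m, y ≠ 0 → fderiv ℝ u y y = 0 := by
    intro y hy
    have h1 : HasDerivAt (fun t : ℝ => t • y) ((1:ℝ) • y) 1 := (hasDerivAt_id 1).smul_const y
    have h2 : HasFDerivAt u (fderiv ℝ u y) ((1:ℝ) • y) := by
      rw [one_smul]; exact (hu_diff y hy).hasFDerivAt
    have hder : HasDerivAt (fun t : ℝ => u (t • y)) (fderiv ℝ u y y) 1 := by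
      have := h2.comp_hasDerivAt 1 h1
      rw [one_smul] at this; exact this
    have hconst : (fun _ : ℝ => u y) =ᶠ[nhds (1:ℝ)] (fun t : ℝ => u (t • y)) := by
      filter_upwards [isOpen_Ioi.mem_nhds (by norm_num : (0:ℝ) < 1)] with t ht
      rw [hu_hom t ht y]
    have hder' : HasDerivAt (fun _ : ℝ => u y) (fderiv ℝ u y y) 1 :=
      hder.congr_of_eventuallyEq hconst
    exact hder'.unique (hasDerivAt_const 1 (u y))
  have heuler : ∀ y : E m, y ≠ 0 → ∑ i : Fin m, y i • pd u i y = 0 := by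
    intro y hy
    unfold pd
    have : ∑ i : Fin m, y i • fderiv ℝ u y (EuclideanSpace.single i 1)
        = fderiv ℝ u y (∑ i : Fin m, y i • EuclideanSpace.single i 1) := by
      rw [map_sum]
      exact Finset.sum_congr rfl fun i _ => ((fderiv ℝ u y).map_smul _ _).symm
    rw [this, sum_single_eq, heuler0 y hy]

  -- derivative of the norm-square and of the scalar coefficients
  have hn : ∀ y : E m, HasFDerivAt (fun z : E m => ‖z‖^2) ((2:ℕ) • (innerSL ℝ y)) y :=
    fun y => (hasStrictFDerivAt_norm_sq y).hasFDerivAt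
  have hf : ∀ y : E m, y ≠ 0 → HasFDerivAt (fun z : E m => -c * (‖z‖^2)⁻¹)
      ((2*c/‖y‖^4) • innerSL ℝ y) y := by
    intro y hy
    have hy' : ‖y‖ ≠ 0 := norm_ne_zero_iff.mpr hy
    have h2 : ‖y‖^2 ≠ 0 := pow_ne_zero 2 hy'
    have hinv := (hasFDerivAt_inv' (𝕜 := ℝ) h2).comp y (hn y)
    have hmul := hinv.const_mul (-c)
    refine hmul.congr_fderiv ?_
    ext w
    simp only [ContinuousLinearMap.smul_apply, ContinuousLinearMap.comp_apply,
      ContinuousLinearMap.neg_apply, ContinuousLinearMap.mulLeftRight_apply, innerSL_apply_apply,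
      smul_eq_mul, nsmul_eq_mul]
    field_simp
    ring
  have ha : ∀ (i : Fin m) (y : E m), y ≠ 0 →
      HasFDerivAt (fun z : E m => (2*c) * (z i * ((‖z‖^2) * (‖z‖^2))⁻¹))
        ((2*c/‖y‖^4) • (EuclideanSpace.proj i : E m →L[ℝ] ℝ)
          + ((-8)*c*(y i)/‖y‖^6) • innerSL ℝ y) y := by
    intro i y hy
    have hy' : ‖y‖ ≠ 0 := norm_ne_zero_iff.mpr hy
    have h2 : (‖y‖^2) * (‖y‖^2) ≠ 0 := mul_ne_zero (pow_ne_zero 2 hy') (pow_ne_zero 2 hy')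
    have hb := (hasFDerivAt_inv' (𝕜 := ℝ) h2).comp y ((hn y).mul (hn y))
    have hproj : HasFDerivAt (fun z : E m => z i)
        (EuclideanSpace.proj i : E m →L[ℝ] ℝ) y :=
      ((EuclideanSpace.proj i : E m →L[ℝ] ℝ).hasFDerivAt).congr_of_eventuallyEq
        (Filter.Eventually.of_forall fun z => rfl)
    have hmul := (hproj.mul hb).const_mul (2*c)
    refine hmul.congr_fderiv ?_
    ext w
    simp only [ContinuousLinearMap.add_apply, ContinuousLinearMap.smul_apply,
      ContinuousLinearMap.comp_apply, ContinuousLinearMap.neg_apply,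
      ContinuousLinearMap.mulLeftRight_apply, innerSL_apply_apply, smul_eq_mul,
      nsmul_eq_mul, PiLp.proj_apply, Function.comp_apply, Pi.mul_apply]
    field_simp
    ring
  -- first derivative of Δu
  have hlapg : ∀ z : E m, z ≠ 0 → lap u z = (-c * (‖z‖^2)⁻¹) • u z := by
    intro z hz
    rw [hu_lap z hz, div_eq_mul_inv]
  have hgd : ∀ z : E m, z ≠ 0 → HasFDerivAt (fun z' : E m => (-c * (‖z'‖^2)⁻¹) • u z')
      ((-c * (‖z‖^2)⁻¹) • fderiv ℝ u z
        + ((2*c/‖z‖^4) • innerSL ℝ z).smulRight (u z)) z :=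
    fun z hz => (hf z hz).smul (hu_diff z hz).hasFDerivAt
  have hxi : ∀ (y : E m) (i : Fin m), ⟪y, (EuclideanSpace.single i (1:ℝ) : E m)⟫ = y i := by
    intro y i
    rw [EuclideanSpace.inner_single_right]
    simp
  have hgw : ∀ (i : Fin m) (z : E m), z ≠ 0 →
      ((-c * (‖z‖^2)⁻¹) • fderiv ℝ u z
        + ((2*c/‖z‖^4) • innerSL ℝ z).smulRight (u z)) (EuclideanSpace.single i 1)
      = wfun c u i z := by
    intro i z hz
    have hz' : ‖z‖ ≠ 0 := norm_ne_zero_iff.mpr hz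
    simp only [ContinuousLinearMap.add_apply, ContinuousLinearMap.coe_smul', Pi.smul_apply,
      ContinuousLinearMap.smulRight_apply, ContinuousLinearMap.smul_apply, innerSL_apply_apply,
      smul_eq_mul, hxi, wfun, pd]
    have hs : 2*c/‖z‖^4 * z i = (2*c) * (z i * ((‖z‖^2) * (‖z‖^2))⁻¹) := by
      have h4 : (‖z‖^2) * (‖z‖^2) = ‖z‖^4 := by ring
      rw [h4, div_eq_mul_inv]; ring
    rw [hs]
    abel
  -- second derivative of Δu
  have hwD : ∀ i : Fin m, HasFDerivAt (wfun c u i)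
      ((((2*c) * (x i * ((‖x‖^2) * (‖x‖^2))⁻¹)) • fderiv ℝ u x
        + ((2*c/‖x‖^4) • (EuclideanSpace.proj i : E m →L[ℝ] ℝ)
          + ((-8)*c*(x i)/‖x‖^6) • innerSL ℝ x).smulRight (u x))
       + ((-c * (‖x‖^2)⁻¹) • fderiv ℝ (fun z => pd u i z) x
        + ((2*c/‖x‖^4) • innerSL ℝ x).smulRight (pd u i x))) x := by
    intro i
    exact ((ha i x hx).smul (hu_diff x hx).hasFDerivAt).add ((hf x hx).smul (hpu_diff i x hx).hasFDerivAt)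
  have hT : ∀ i : Fin m, fderiv ℝ (wfun c u i) x (EuclideanSpace.single i 1)
      = (2*c/‖x‖^4 - 8*c*(x i)^2/‖x‖^6) • u x
        + ((2*c/‖x‖^4 * (x i)) • pd u i x
        + ((2*c/‖x‖^4 * (x i)) • pd u i x
        + (-c * (‖x‖^2)⁻¹) • pd (fun z => pd u i z) i x)) := by
    intro i
    rw [(hwD i).fderiv]
    simp only [ContinuousLinearMap.add_apply, ContinuousLinearMap.coe_smul', Pi.smul_apply,
      ContinuousLinearMap.smulRight_apply, ContinuousLinearMap.smul_apply,
      ContinuousLinearMap.comp_apply, innerSL_apply_apply, smul_eq_mul, hxi,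
      PiLp.proj_apply, EuclideanSpace.single_apply, eq_self_iff_true, if_true, pd]
    module
  have hTsum : ∑ i : Fin m, fderiv ℝ (wfun c u i) x (EuclideanSpace.single i 1)
      = ((2*c*(m:ℝ) - 8*c + c^2)/‖x‖^4) • u x := by
    rw [Finset.sum_congr rfl (fun i _ => hT i)]
    rw [Finset.sum_add_distrib, Finset.sum_add_distrib, Finset.sum_add_distrib]
    have e1 : ∑ i : Fin m, (2*c/‖x‖^4 - 8*c*(x i)^2/‖x‖^6) • u x
        = ((2*c*(m:ℝ) - 8*c)/‖x‖^4) • u x := by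
      rw [← Finset.sum_smul]
      congr 1
      rw [Finset.sum_sub_distrib]
      have h1 : ∑ _i : Fin m, 2*c/‖x‖^4 = (m:ℝ) * (2*c/‖x‖^4) := by
        rw [Finset.sum_const, Finset.card_univ, Fintype.card_fin, nsmul_eq_mul]
      have h2 : ∑ i : Fin m, 8*c*(x i)^2/‖x‖^6 = (8*c/‖x‖^6) * ‖x‖^2 := by
        rw [← norm_sq_sum, Finset.mul_sum]
        exact Finset.sum_congr rfl fun i _ => by ring
      rw [h1, h2]
      field_simp
    have e2 : ∑ i : Fin m, (2*c/‖x‖^4 * (x i)) • pd u i x = 0 := by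
      have h3 : ∀ i : Fin m, (2*c/‖x‖^4 * (x i)) • pd u i x
          = (2*c/‖x‖^4) • (x i • pd u i x) := fun i => mul_smul _ _ _
      rw [Finset.sum_congr rfl fun i _ => h3 i, ← Finset.smul_sum, heuler x hx, smul_zero]
    have e4 : ∑ i : Fin m, (-c * (‖x‖^2)⁻¹) • pd (fun z => pd u i z) i x
        = (c^2/‖x‖^4) • u x := by
      rw [← Finset.smul_sum]
      have hlapxx : ∑ i : Fin m, pd (fun z => pd u i z) i x = lap u x := rfl
      rw [hlapxx, hu_lap x hx, smul_smul]
      congr 1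
      field_simp
    rw [e1, e2, e4]
    simp only [add_zero, zero_add]
    rw [← add_smul]
    congr 1
    field_simp
  -- transporting to q
  have hpq : ∀ (i : Fin m) (y : E m), y ≠ 0 →
      pd (qmap α u) i y = Real.sin α • inclL N (pd u i y) := by
    intro i y hy
    have hq : HasFDerivAt (qmap α u)
        (Real.sin α • ((inclL N).comp (fderiv ℝ u y))) y := by
      rw [qmap_eq]
      exact (((inclL N).hasFDerivAt.comp y (hu_diff y hy).hasFDerivAt).const_smul
        (Real.sin α)).add_const _
    unfold pd
    rw [hq.fderiv]
    simp [pd]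
  have hlapq : ∀ y : E m, y ≠ 0 → lap (qmap α u) y = Real.sin α • inclL N (lap u y) := by
    intro y hy
    unfold lap
    have h5 : ∀ i : Fin m, pd (fun z => pd (qmap α u) i z) i y
        = Real.sin α • inclL N (pd (fun z => pd u i z) i y) := by
      intro i
      rw [pd_congr (fun z hz => hpq i z hz) hy i]
      have h2 : HasFDerivAt (fun z => Real.sin α • inclL N (pd u i z))
          (Real.sin α • ((inclL N).comp (fderiv ℝ (fun z => pd u i z) y))) y :=
        ((inclL N).hasFDerivAt.comp y (hpu_diff i y hy).hasFDerivAt).const_smul (Real.sin α)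
      rw [pd, h2.fderiv]
      simp [pd]
    rw [Finset.sum_congr rfl fun i _ => h5 i, map_sum, Finset.smul_sum]
  have hpl : ∀ (i : Fin m) (y : E m), y ≠ 0 →
      pd (lap (qmap α u)) i y = Real.sin α • inclL N (wfun c u i y) := by
    intro i y hy
    rw [pd_congr (fun z hz => hlapq z hz) hy i]
    rw [pd_congr (F := fun z => Real.sin α • inclL N (lap u z))
      (G := fun z => Real.sin α • inclL N ((-c * (‖z‖^2)⁻¹) • u z))
      (fun z hz => by simp only [hlapg z hz]) hy i]
    have h2 : HasFDerivAt (fun z => Real.sin α • inclL N ((-c * (‖z‖^2)⁻¹) • u z))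
        (Real.sin α • ((inclL N).comp ((-c * (‖y‖^2)⁻¹) • fderiv ℝ u y
          + ((2*c/‖y‖^4) • innerSL ℝ y).smulRight (u y)))) y :=
      ((inclL N).hasFDerivAt.comp y (hgd y hy)).const_smul (Real.sin α)
    rw [pd, h2.fderiv]
    simp only [ContinuousLinearMap.smul_apply, ContinuousLinearMap.comp_apply]
    rw [hgw i y hy]
  have hwdiff : ∀ i : Fin m, DifferentiableAt ℝ (wfun c u i) x :=
    fun i => (hwD i).differentiableAt
  have hlaplapq : lap (lap (qmap α u)) x
      = Real.sin α • inclL N (∑ i : Fin m, fderiv ℝ (wfun c u i) x (EuclideanSpace.single i 1)) := by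
    have expand : ∀ (F : E m → E (N+1)) (y : E m),
        lap F y = ∑ i : Fin m, pd (fun z => pd F i z) i y := fun F y => rfl
    rw [expand (lap (qmap α u)) x]
    have h6 : ∀ i : Fin m, pd (fun z => pd (lap (qmap α u)) i z) i x
        = Real.sin α • inclL N (fderiv ℝ (wfun c u i) x (EuclideanSpace.single i 1)) := by
      intro i
      rw [pd_congr (fun z hz => hpl i z hz) hx i]
      have h2 : HasFDerivAt (fun z => Real.sin α • inclL N (wfun c u i z))
          (Real.sin α • ((inclL N).comp (fderiv ℝ (wfun c u i) x))) x :=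
        ((inclL N).hasFDerivAt.comp x (hwdiff i).hasFDerivAt).const_smul (Real.sin α)
      rw [pd, h2.fderiv]
      simp
    rw [Finset.sum_congr rfl fun i _ => h6 i, map_sum, Finset.smul_sum]
  obtain ⟨hα1, hα2⟩ := hα
  have hs0 : 0 < Real.sin α := Real.sin_pos_of_pos_of_lt_pi hα1 (by nlinarith [pi_pos])
  have hl0 : (ℓ:ℝ) ≠ 0 := by linarith
  have hlm0 : (ℓ:ℝ) + (m:ℝ) - 2 ≠ 0 := by nlinarith
  constructor
  · -- gradient identity
    unfold gradSq
    have h7 : ∀ i : Fin m, ‖pd (qmap α u) i x‖^2 = Real.sin α ^2 * ‖pd u i x‖^2 := by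
      intro i
      rw [hpq i x hx, norm_smul]
      rw [show ‖inclL N (pd u i x)‖ = ‖pd u i x‖ from (incl N).norm_map _]
      rw [mul_pow, Real.norm_eq_abs, sq_abs]
    rw [Finset.sum_congr rfl fun i _ => h7 i, ← Finset.mul_sum]
    have h8 : ∑ i : Fin m, ‖pd u i x‖^2 = gradSq u x := rfl
    rw [h8, hu_grad x hx, hsin, hcdef]
    field_simp
  · rw [hlaplapq, hTsum]
    rw [qmap_eq]
    simp only [_root_.map_smul, inclL_apply]
    trans Real.sin α ^ 2 * ((2*c*(m:ℝ) - 8*c + c^2)/‖x‖^4)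
    · simp only [inner_add_right, real_inner_smul_left, real_inner_smul_right,
        LinearIsometry.inner_map_map, EuclideanSpace.inner_single_right, PiLp.smul_apply,
        smul_eq_mul, incl_apply_last,
        map_zero, mul_zero, add_zero, real_inner_self_eq_norm_sq, hu_unit x hx, one_pow,
        mul_one, one_mul]
      ring
    · rw [hsin, hcdef]
      field_simp
      ring


end
end

section
/- Let u : U → S^n ⊂ ℝ^{n+1} be a smooth map defined on an open neighborhood U of the closed unit ball in ℝ^m, and let V : B^m → ℝ^{n+1} be a smooth map with compact support contained in B^m such that ⟨u(x), V(x)⟩ = 0 for all x. Then ∫_{B^m} ( ⟨u, ΔV⟩² + ⟨V, Δu⟩² + 2 Σ_{i=1}^m ⟨V, ∂_i(Δu)⟩⟨∂_i u, V⟩ + 2 Σ_{i=1}^m ⟨Δu, ∂_i V⟩⟨∂_i u, V⟩ + 2 ⟨ΔV, u⟩ Σ_{i=1}^m ⟨∂_i u, ∂_i V⟩ ) dx = 0. -/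
open MeasureTheory Metric Real RealInnerProductSpace

noncomputable section

/- ### Auxiliary lemmas -/

lemma ContDiffAt.pd' {m N : ℕ} {f : E m → E N} {x : E m}
    (hf : ContDiffAt ℝ (⊤ : ℕ∞) f x) (i : Fin m) : ContDiffAt ℝ (⊤ : ℕ∞) (pd f i) x := by
  have h := hf.fderiv_right (m := (⊤ : ℕ∞)) (by exact_mod_cast le_top)
  exact h.clm_apply contDiffAt_const

lemma contDiffAt_lap {m N : ℕ} {f : E m → E N} {x : E m}
    (hf : ContDiffAt ℝ (⊤ : ℕ∞) f x) : ContDiffAt ℝ (⊤ : ℕ∞) (lap f) x := by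
  unfold lap
  exact ContDiffAt.sum (fun i _ => (hf.pd' i).pd' i)

lemma fderiv_eq_zero_of_not_mem_tsupport' {X F : Type*} [NormedAddCommGroup X] [NormedSpace ℝ X]
    [NormedAddCommGroup F] [NormedSpace ℝ F] {f : X → F} {x : X} (hx : x ∉ tsupport f) :
    fderiv ℝ f x = 0 := by
  have h : f =ᶠ[nhds x] (fun _ => 0) := notMem_tsupport_iff_eventuallyEq.1 hx
  rw [h.fderiv_eq, fderiv_fun_const]
  rfl

/-- The integral of a directional derivative of a smooth compactly supported scalar
function vanishes. -/
lemma integral_fderiv_apply_eq_zero {m : ℕ} {f : E m → ℝ} (hf : ContDiff ℝ (⊤ : ℕ∞) f)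
    (hsupp : HasCompactSupport f) (v : E m) :
    ∫ x : E m, fderiv ℝ f x v = 0 := by
  have hdiff : Differentiable ℝ f := hf.differentiable (by simp)
  have hf' : Continuous (fun x => fderiv ℝ f x v) := by
    have := (hf.fderiv_right (m := (⊤ : ℕ∞)) (by exact_mod_cast le_top)).clm_apply
      (contDiff_const (c := v))
    exact this.continuous
  have hsupp' : HasCompactSupport (fun x => fderiv ℝ f x v) := by
    apply hsupp.of_isClosed_subset (isClosed_tsupport _)
    refine closure_minimal (fun x hx => ?_) (isClosed_tsupport f)
    by_contra hxt
    simp only [Function.mem_support, ne_eq] at hx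
    exact hx (by rw [fderiv_eq_zero_of_not_mem_tsupport' hxt]; rfl)
  have h1 := integral_mul_fderiv_eq_neg_fderiv_mul_of_integrable
    (μ := (volume : Measure (E m))) (f := fun _ => (1 : ℝ)) (g := f)
    (v := v) ?_ ?_ ?_ (fun x _ => differentiableAt_const _) (fun x _ => hdiff x)
  · simpa using h1
  · simp
  · simpa using hf'.integrable_of_hasCompactSupport hsupp'
  · simpa using hf.continuous.integrable_of_hasCompactSupport hsupp

theorem key_integral_identity
    (m n : ℕ) (U : Set (E m)) (hU : IsOpen U)
    (hUb : closedBall (0 : E m) 1 ⊆ U)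
    (u : E m → E (n + 1))
    (hu_smooth : ContDiffOn ℝ (⊤ : ℕ∞) u U)
    (hu_sphere : ∀ x ∈ U, ‖u x‖ = 1)
    (V : E m → E (n + 1)) (hV_smooth : ContDiff ℝ (⊤ : ℕ∞) V)
    (hV_supp : tsupport V ⊆ ball (0 : E m) 1)
    (horth : ∀ x ∈ ball (0 : E m) 1, ⟪u x, V x⟫ = 0) :
    ∫ x in ball (0 : E m) 1,
      (⟪u x, lap V x⟫ ^ 2 + ⟪V x, lap u x⟫ ^ 2
        + 2 * (∑ i : Fin m, ⟪V x, pd (fun y => lap u y) i x⟫ * ⟪pd u i x, V x⟫)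
        + 2 * (∑ i : Fin m, ⟪lap u x, pd V i x⟫ * ⟪pd u i x, V x⟫)
        + 2 * ⟪lap V x, u x⟫ * (∑ i : Fin m, ⟪pd u i x, pd V i x⟫)) = 0 := by
  classical
  have hBU : ball (0 : E m) 1 ⊆ U := ball_subset_closedBall.trans hUb
  have hle1 : (1 : WithTop ℕ∞) ≤ ((⊤ : ℕ∞) : WithTop ℕ∞) := by exact_mod_cast le_top
  -- smoothness of `u` and `V` at relevant points
  have hu_at : ∀ x ∈ U, ContDiffAt ℝ (⊤ : ℕ∞) u x := fun x hx =>
    hu_smooth.contDiffAt (hU.mem_nhds hx)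
  have hV_at : ∀ x : E m, ContDiffAt ℝ (⊤ : ℕ∞) V x := fun x => hV_smooth.contDiffAt
  -- the key auxiliary scalar fields
  set W : Fin m → E m → ℝ :=
    fun i y => ⟪V y, lap u y⟫ * ⟪pd u i y, V y⟫ with hWdef
  -- basic differentiability facts
  have hVd : ∀ x : E m, DifferentiableAt ℝ V x := fun x =>
    (hV_at x).differentiableAt (by simp)
  have hpVd : ∀ (i : Fin m) (x : E m), DifferentiableAt ℝ (pd V i) x := fun i x =>
    ((hV_at x).pd' i).differentiableAt (by simp)
  have hud : ∀ x ∈ U, DifferentiableAt ℝ u x := fun x hx =>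
    (hu_at x hx).differentiableAt (by simp)
  have hpud : ∀ (i : Fin m), ∀ x ∈ U, DifferentiableAt ℝ (pd u i) x := fun i x hx =>
    ((hu_at x hx).pd' i).differentiableAt (by simp)
  have hlud : ∀ x ∈ U, DifferentiableAt ℝ (lap u) x := fun x hx =>
    (contDiffAt_lap (hu_at x hx)).differentiableAt (by simp)
  -- support of `V` is compact
  have hVsupp_cpt : IsCompact (tsupport V) :=
    (isCompact_closedBall (0 : E m) 1).of_isClosed_subset (isClosed_tsupport V)
      (hV_supp.trans ball_subset_closedBall)
  -- W is smooth everywhere and compactly supported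
  have hWsupp : ∀ i : Fin m, Function.support (W i) ⊆ tsupport V := by
    intro i y hy
    by_contra hyt
    have hVy : V y = 0 := image_eq_zero_of_notMem_tsupport hyt
    simp only [Function.mem_support, ne_eq, hWdef, hVy, inner_zero_left, zero_mul,
      not_true_eq_false] at hy
  have hWts : ∀ i : Fin m, tsupport (W i) ⊆ tsupport V := fun i =>
    closure_minimal (hWsupp i) (isClosed_tsupport V)
  have hWc : ∀ i : Fin m, HasCompactSupport (W i) := fun i =>
    hVsupp_cpt.of_isClosed_subset (isClosed_tsupport _) (hWts i)
  have hWsmooth : ∀ i : Fin m, ContDiff ℝ (⊤ : ℕ∞) (W i) := by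
    intro i
    rw [contDiff_iff_contDiffAt]
    intro x
    by_cases hx : x ∈ tsupport V
    · have hxU : x ∈ U := hBU (hV_supp hx)
      exact ((hV_at x).inner ℝ (contDiffAt_lap (hu_at x hxU))).mul
        (((hu_at x hxU).pd' i).inner ℝ (hV_at x))
    · have hop : (tsupport V)ᶜ ∈ nhds x := (isClosed_tsupport V).isOpen_compl.mem_nhds hx
      have hev : W i =ᶠ[nhds x] (fun _ => 0) := by
        filter_upwards [hop] with y hy
        have hVy : V y = 0 := image_eq_zero_of_notMem_tsupport hy
        simp [hWdef, hVy]
      exact (contDiffAt_const (c := (0 : ℝ))).congr_of_eventuallyEq hev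
  -- the derivative of W i in direction i, at points of U
  have hWd : ∀ (i : Fin m), ∀ x ∈ U,
      fderiv ℝ (W i) x (EuclideanSpace.single i 1) =
        ⟪V x, lap u x⟫ * (⟪pd u i x, pd V i x⟫ + ⟪pd (pd u i) i x, V x⟫)
          + ⟪pd u i x, V x⟫ * (⟪V x, pd (lap u) i x⟫ + ⟪pd V i x, lap u x⟫) := by
    intro i x hx
    have ha : DifferentiableAt ℝ (fun y => ⟪V y, lap u y⟫) x := (hVd x).inner ℝ (hlud x hx)
    have hb : DifferentiableAt ℝ (fun y => ⟪pd u i y, V y⟫) x :=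
      (hpud i x hx).inner ℝ (hVd x)
    have hm : fderiv ℝ (W i) x = ⟪V x, lap u x⟫ • fderiv ℝ (fun y => ⟪pd u i y, V y⟫) x
        + ⟪pd u i x, V x⟫ • fderiv ℝ (fun y => ⟪V y, lap u y⟫) x := fderiv_mul ha hb
    rw [hm]
    simp only [ContinuousLinearMap.add_apply, ContinuousLinearMap.coe_smul',
      Pi.smul_apply, smul_eq_mul]
    rw [fderiv_inner_apply ℝ (hpud i x hx) (hVd x), fderiv_inner_apply ℝ (hVd x) (hlud x hx)]
    rfl
  -- first-order consequence of orthogonality on the ball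
  have horth1 : ∀ x ∈ ball (0 : E m) 1, ∀ i : Fin m,
      ⟪u x, pd V i x⟫ + ⟪pd u i x, V x⟫ = 0 := by
    intro x hx i
    have hev : (fun y => ⟪u y, V y⟫) =ᶠ[nhds x] (fun _ => 0) := by
      filter_upwards [isOpen_ball.mem_nhds hx] with y hy using horth y hy
    have h0 : fderiv ℝ (fun y => ⟪u y, V y⟫) x = 0 := by
      rw [hev.fderiv_eq, fderiv_fun_const]; rfl
    have := fderiv_inner_apply ℝ (hud x (hBU hx)) (hVd x) (EuclideanSpace.single i 1)
    rw [h0] at this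
    simpa [pd] using this.symm
  -- second-order consequence
  have horth2 : ∀ x ∈ ball (0 : E m) 1, ∀ i : Fin m,
      (⟪u x, pd (pd V i) i x⟫ + ⟪pd u i x, pd V i x⟫)
        + (⟪pd u i x, pd V i x⟫ + ⟪pd (pd u i) i x, V x⟫) = 0 := by
    intro x hx i
    have hev : (fun y => ⟪u y, pd V i y⟫ + ⟪pd u i y, V y⟫) =ᶠ[nhds x] (fun _ => 0) := by
      filter_upwards [isOpen_ball.mem_nhds hx] with y hy using horth1 y hy i
    have h0 : fderiv ℝ (fun y => ⟪u y, pd V i y⟫ + ⟪pd u i y, V y⟫) x = 0 := by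
      rw [hev.fderiv_eq, fderiv_fun_const]; rfl
    have hA : DifferentiableAt ℝ (fun y => ⟪u y, pd V i y⟫) x :=
      (hud x (hBU hx)).inner ℝ (hpVd i x)
    have hB : DifferentiableAt ℝ (fun y => ⟪pd u i y, V y⟫) x :=
      (hpud i x (hBU hx)).inner ℝ (hVd x)
    have hsum : fderiv ℝ (fun y => ⟪u y, pd V i y⟫ + ⟪pd u i y, V y⟫) x
        = fderiv ℝ (fun y => ⟪u y, pd V i y⟫) x + fderiv ℝ (fun y => ⟪pd u i y, V y⟫) x :=
      fderiv_add hA hB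
    have happ := congrArg (fun (L : E m →L[ℝ] ℝ) => L (EuclideanSpace.single i 1)) (hsum.symm.trans h0)
    simp only [ContinuousLinearMap.add_apply, ContinuousLinearMap.zero_apply] at happ
    rw [fderiv_inner_apply ℝ (hud x (hBU hx)) (hpVd i x),
      fderiv_inner_apply ℝ (hpud i x (hBU hx)) (hVd x)] at happ
    calc (⟪u x, pd (pd V i) i x⟫ + ⟪pd u i x, pd V i x⟫)
          + (⟪pd u i x, pd V i x⟫ + ⟪pd (pd u i) i x, V x⟫)
        = (⟪u x, fderiv ℝ (pd V i) x (EuclideanSpace.single i 1)⟫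
            + ⟪fderiv ℝ u x (EuclideanSpace.single i 1), pd V i x⟫)
          + (⟪pd u i x, fderiv ℝ V x (EuclideanSpace.single i 1)⟫
            + ⟪fderiv ℝ (pd u i) x (EuclideanSpace.single i 1), V x⟫) := rfl
      _ = 0 := happ
  -- summed second-order relation
  have hrel : ∀ x ∈ ball (0 : E m) 1,
      ⟪u x, lap V x⟫ + 2 * (∑ i : Fin m, ⟪pd u i x, pd V i x⟫) + ⟪V x, lap u x⟫ = 0 := by
    intro x hx
    have hsum : ∑ i : Fin m, ((⟪u x, pd (pd V i) i x⟫ + ⟪pd u i x, pd V i x⟫)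
        + (⟪pd u i x, pd V i x⟫ + ⟪pd (pd u i) i x, V x⟫)) = 0 :=
      Finset.sum_eq_zero (fun i _ => horth2 x hx i)
    simp only [Finset.sum_add_distrib] at hsum
    have e1 : ∑ i : Fin m, ⟪u x, pd (pd V i) i x⟫ = ⟪u x, lap V x⟫ := by
      rw [lap, inner_sum]
    have e2 : ∑ i : Fin m, ⟪pd (pd u i) i x, V x⟫ = ⟪V x, lap u x⟫ := by
      rw [lap, inner_sum]
      exact Finset.sum_congr rfl (fun i _ => real_inner_comm _ _)
    rw [e1, e2] at hsum
    linarith [hsum]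
  -- pointwise identity: the integrand is twice the divergence of W
  have hpoint : ∀ x ∈ ball (0 : E m) 1,
      (⟪u x, lap V x⟫ ^ 2 + ⟪V x, lap u x⟫ ^ 2
        + 2 * (∑ i : Fin m, ⟪V x, pd (fun y => lap u y) i x⟫ * ⟪pd u i x, V x⟫)
        + 2 * (∑ i : Fin m, ⟪lap u x, pd V i x⟫ * ⟪pd u i x, V x⟫)
        + 2 * ⟪lap V x, u x⟫ * (∑ i : Fin m, ⟪pd u i x, pd V i x⟫))
      = 2 * ∑ i : Fin m, fderiv ℝ (W i) x (EuclideanSpace.single i 1) := by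
    intro x hx
    have hxU : x ∈ U := hBU hx
    have hS : ∑ i : Fin m, fderiv ℝ (W i) x (EuclideanSpace.single i 1)
        = ∑ i : Fin m,
          (⟪V x, lap u x⟫ * (⟪pd u i x, pd V i x⟫ + ⟪pd (pd u i) i x, V x⟫)
            + ⟪pd u i x, V x⟫ * (⟪V x, pd (lap u) i x⟫ + ⟪pd V i x, lap u x⟫)) :=
      Finset.sum_congr rfl (fun i _ => hWd i x hxU)
    rw [hS]
    simp only [mul_add, Finset.sum_add_distrib, ← Finset.mul_sum]
    have e2 : ∑ i : Fin m, ⟪pd (pd u i) i x, V x⟫ = ⟪V x, lap u x⟫ := by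
      rw [lap, inner_sum]
      exact Finset.sum_congr rfl (fun i _ => real_inner_comm _ _)
    have eT1 : ∑ i : Fin m, ⟪pd u i x, V x⟫ * ⟪V x, pd (lap u) i x⟫
        = ∑ i : Fin m, ⟪V x, pd (fun y => lap u y) i x⟫ * ⟪pd u i x, V x⟫ :=
      Finset.sum_congr rfl (fun i _ => mul_comm _ _)
    have eT2 : ∑ i : Fin m, ⟪pd u i x, V x⟫ * ⟪pd V i x, lap u x⟫
        = ∑ i : Fin m, ⟪lap u x, pd V i x⟫ * ⟪pd u i x, V x⟫ := by
      refine Finset.sum_congr rfl (fun i _ => ?_)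
      rw [real_inner_comm (pd V i x), mul_comm]
    rw [e2, eT1, eT2]
    have hAcomm : ⟪lap V x, u x⟫ = ⟪u x, lap V x⟫ := real_inner_comm _ _
    rw [hAcomm]
    have := hrel x hx
    linear_combination (⟪u x, lap V x⟫ - ⟪V x, lap u x⟫) * this
  -- now the integral computation
  rw [setIntegral_congr_fun measurableSet_ball hpoint]
  -- each divergence term integrates to zero
  have hDWcont : ∀ i : Fin m, Continuous (fun x => fderiv ℝ (W i) x (EuclideanSpace.single i 1)) := by
    intro i
    have := ((hWsmooth i).fderiv_right (m := (⊤ : ℕ∞)) (by exact_mod_cast le_top)).clm_apply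
      (contDiff_const (c := EuclideanSpace.single i (1 : ℝ)))
    exact this.continuous
  have hDWsupp : ∀ i : Fin m, HasCompactSupport
      (fun x => fderiv ℝ (W i) x (EuclideanSpace.single i 1)) := by
    intro i
    apply (hWc i).of_isClosed_subset (isClosed_tsupport _)
    refine closure_minimal (fun x hx => ?_) (isClosed_tsupport (W i))
    by_contra hxt
    simp only [Function.mem_support, ne_eq] at hx
    exact hx (by rw [fderiv_eq_zero_of_not_mem_tsupport' hxt]; rfl)
  have hint : ∀ i : Fin m,
      IntegrableOn (fun x => fderiv ℝ (W i) x (EuclideanSpace.single i 1))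
        (ball (0 : E m) 1) volume := fun i =>
    ((hDWcont i).integrable_of_hasCompactSupport (hDWsupp i)).integrableOn
  have hzero : ∀ i : Fin m,
      ∫ x in ball (0 : E m) 1, fderiv ℝ (W i) x (EuclideanSpace.single i 1) = 0 := by
    intro i
    have hext : ∫ x in ball (0 : E m) 1, fderiv ℝ (W i) x (EuclideanSpace.single i 1)
        = ∫ x : E m, fderiv ℝ (W i) x (EuclideanSpace.single i 1) := by
      apply setIntegral_eq_integral_of_forall_compl_eq_zero
      intro x hx
      have hxt : x ∉ tsupport (W i) := fun hc => hx (hV_supp (hWts i hc))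
      rw [fderiv_eq_zero_of_not_mem_tsupport' hxt]; rfl
    rw [hext]
    exact integral_fderiv_apply_eq_zero (hWsmooth i) (hWc i) _
  rw [integral_const_mul, integral_finset_sum _ (fun i _ => hint i)]
  simp [hzero]

end
end
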